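/- Let G be a score-symmetric competitiveness-based ranking game with d ≥ 2 players, n shared actions, and prizes u_1,…,u_d ∈ [0,1]. Let δ > 0 and let x and x̃ be two mixed profiles such that for every player k and every j ∈ {1,…,n}, |Σ_{l=1}^{j} (x̃^k_l − x^k_l)| < δ. Then for every player i and every action j, |π^i_j(x̃) − π^i_j(x)| < 3^{d−1}·((1+δ)^{d−1} − 1). In particular, if 0 < ε ≤ 1 and δ = ε/(4d²·3^d), then |π^i_j(x̃) − π^i_j(x)| < ε/4 for all i, j. -/

import Mathlib

open Finset
open scoped Classical

/-- Prize share of player `i` in the pure profile `s` of a score-symmetric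
competitiveness-based ranking game with shared scores `score` and prizes `u`
(0-indexed: `u ⟨0⟩` is the first prize): if `w` players have strictly higher
score and `t` players (including `i`) are tied with `i`, the tied players
equally share the prizes for positions `w+1, …, w+t`. -/
noncomputable def shareSS (d n : ℕ) (score : Fin n → ℝ) (u : Fin d → ℝ)
    (s : Fin d → Fin n) (i : Fin d) : ℝ :=
  (∑ l : Fin d,
      if (Finset.univ.filter fun k => score (s i) < score (s k)).card ≤ (l : ℕ) ∧
          (l : ℕ) < (Finset.univ.filter fun k => score (s i) < score (s k)).card +
            (Finset.univ.filter fun k => score (s k) = score (s i)).card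
      then u l else 0) /
    (((Finset.univ.filter fun k => score (s k) = score (s i)).card : ℕ) : ℝ)

/-- Expected payoff `π_j^i(x)` of player `i` from playing the pure strategy
`a_j` when every other player `k` plays his mixed strategy `x k`: the
expectation of his prize share minus the cost `c i j`. -/
noncomputable def piSS (d n : ℕ) (score : Fin n → ℝ) (u : Fin d → ℝ)
    (c : Fin d → Fin n → ℝ) (x : Fin d → Fin n → ℝ) (i : Fin d) (j : Fin n) : ℝ :=
  ∑ s : Fin d → Fin n,
    if s i = j then
      (∏ k ∈ Finset.univ.erase i, x k (s k)) * (shareSS d n score u s i - c i j)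
    else 0

private lemma shareSS_nonneg (d n : ℕ) (score : Fin n → ℝ) (u : Fin d → ℝ)
    (hu0 : ∀ l, 0 ≤ u l) (s : Fin d → Fin n) (i : Fin d) :
    0 ≤ shareSS d n score u s i := by
  unfold shareSS
  apply div_nonneg
  · apply Finset.sum_nonneg
    intro l _
    split
    · exact hu0 l
    · exact le_rfl
  · exact Nat.cast_nonneg _

private lemma shareSS_le_one (d n : ℕ) (score : Fin n → ℝ) (u : Fin d → ℝ)
    (hu1 : ∀ l, u l ≤ 1) (s : Fin d → Fin n) (i : Fin d) :
    shareSS d n score u s i ≤ 1 := by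
  unfold shareSS
  set w := (Finset.univ.filter fun k => score (s i) < score (s k)).card with hw
  set T := (Finset.univ.filter fun k : Fin d => score (s k) = score (s i)).card with hT
  have hTpos : 0 < T := Finset.card_pos.2 ⟨i, by simp⟩
  rw [div_le_one (by exact_mod_cast hTpos)]
  have step1 : (∑ l : Fin d, if w ≤ (l : ℕ) ∧ (l : ℕ) < w + T then u l else 0)
      ≤ ∑ l : Fin d, (if w ≤ (l : ℕ) ∧ (l : ℕ) < w + T then (1:ℝ) else 0) := by
    apply Finset.sum_le_sum
    intro l _
    split
    · exact hu1 l
    · exact le_rfl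
  have step2 : (∑ l : Fin d, if w ≤ (l : ℕ) ∧ (l : ℕ) < w + T then (1:ℝ) else 0)
      = ((Finset.univ.filter fun l : Fin d => w ≤ (l : ℕ) ∧ (l : ℕ) < w + T).card : ℝ) :=
    Finset.sum_boole _ _
  have step3 : (Finset.univ.filter fun l : Fin d => w ≤ (l : ℕ) ∧ (l : ℕ) < w + T).card ≤ T := by
    have h := Finset.card_le_card_of_injOn (fun l : Fin d => (l : ℕ) - w)
      (s := Finset.univ.filter fun l : Fin d => w ≤ (l : ℕ) ∧ (l : ℕ) < w + T)
      (t := Finset.range T)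
      (fun a ha => by
        simp only [Finset.coe_filter, Set.mem_setOf_eq, Finset.mem_univ, true_and] at ha
        simp only [Finset.coe_range, Set.mem_Iio]; omega)
      (fun a ha b hb hab => by
        simp only [Finset.coe_filter, Set.mem_setOf_eq, Finset.mem_univ, true_and] at ha hb
        have hab' : (a : ℕ) - w = (b : ℕ) - w := hab
        exact Fin.ext (by omega))
    simpa using h
  calc (∑ l : Fin d, if w ≤ (l : ℕ) ∧ (l : ℕ) < w + T then u l else 0)
      ≤ ∑ l : Fin d, (if w ≤ (l : ℕ) ∧ (l : ℕ) < w + T then (1:ℝ) else 0) := step1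
    _ = _ := step2
    _ ≤ (T : ℝ) := by exact_mod_cast step3

private lemma shareSS_update (d n : ℕ) (score : Fin n → ℝ) (u : Fin d → ℝ)
    (s : Fin d → Fin n) (i m : Fin d) (hm : m ≠ i) (a : Fin n)
    (hlt : score (s i) < score a ↔ score (s i) < score (s m))
    (heq : score a = score (s i) ↔ score (s m) = score (s i)) :
    shareSS d n score u (Function.update s m a) i = shareSS d n score u s i := by
  have hi : Function.update s m a i = s i := Function.update_of_ne (Ne.symm hm) _ _
  have h1 : (Finset.univ.filter fun k =>
        score (Function.update s m a i) < score (Function.update s m a k))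
      = Finset.univ.filter fun k => score (s i) < score (s k) := by
    rw [hi]
    ext k
    simp only [Finset.mem_filter, Finset.mem_univ, true_and]
    rcases eq_or_ne k m with rfl | hk
    · rw [Function.update_self]; exact hlt
    · rw [Function.update_of_ne hk]
  have h2 : (Finset.univ.filter fun k =>
        score (Function.update s m a k) = score (Function.update s m a i))
      = Finset.univ.filter fun k => score (s k) = score (s i) := by
    rw [hi]
    ext k
    simp only [Finset.mem_filter, Finset.mem_univ, true_and]
    rcases eq_or_ne k m with rfl | hk
    · rw [Function.update_self]; exact heq
    · rw [Function.update_of_ne hk]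
  unfold shareSS
  rw [h1, h2]

private lemma sum_prod_eq_prod_sum (d n : ℕ) (G : Fin d → Fin n → ℝ) :
    ∑ s : Fin d → Fin n, ∏ k, G k (s k) = ∏ k, ∑ l, G k l :=
  (Fintype.prod_sum G).symm

/-- Expected prize share of player `i` playing against mixed strategies `y`. -/
private noncomputable def Afun (d n : ℕ) (score : Fin n → ℝ) (u : Fin d → ℝ)
    (i : Fin d) (j : Fin n) (y : Fin d → Fin n → ℝ) : ℝ :=
  ∑ s : Fin d → Fin n,
    if s i = j then (∏ k ∈ Finset.univ.erase i, y k (s k)) * shareSS d n score u s i else 0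

/-- Conditional expected share given player `m` plays `l`. -/
private noncomputable def Cfun (d n : ℕ) (score : Fin n → ℝ) (u : Fin d → ℝ)
    (i : Fin d) (j : Fin n) (m : Fin d) (y : Fin d → Fin n → ℝ) (l : Fin n) : ℝ :=
  ∑ s : Fin d → Fin n,
    if s i = j ∧ s m = l then
      (∏ k ∈ (Finset.univ.erase i).erase m, y k (s k)) * shareSS d n score u s i
    else 0

private lemma Afun_congr (d n : ℕ) (score : Fin n → ℝ) (u : Fin d → ℝ)
    (i : Fin d) (j : Fin n) (y y' : Fin d → Fin n → ℝ)
    (h : ∀ k, k ≠ i → y k = y' k) :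
    Afun d n score u i j y = Afun d n score u i j y' := by
  unfold Afun
  refine Finset.sum_congr rfl fun s _ => ?_
  have : (∏ k ∈ Finset.univ.erase i, y k (s k)) = ∏ k ∈ Finset.univ.erase i, y' k (s k) :=
    Finset.prod_congr rfl fun k hk => by rw [h k (Finset.mem_erase.1 hk).1]
  rw [this]

private lemma piSS_eq_Afun (d n : ℕ) (score : Fin n → ℝ) (u : Fin d → ℝ)
    (c : Fin d → Fin n → ℝ) (y : Fin d → Fin n → ℝ)
    (hy1 : ∀ k, ∑ l, y k l = 1) (i : Fin d) (j : Fin n) :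
    piSS d n score u c y i j = Afun d n score u i j y - c i j := by
  classical
  set G : Fin d → Fin n → ℝ := fun k l => if k = i then (if l = j then 1 else 0) else y k l
    with hG
  have hB : (∑ s : Fin d → Fin n,
      if s i = j then (∏ k ∈ Finset.univ.erase i, y k (s k)) else 0) = 1 := by
    have h1 : ∀ s : Fin d → Fin n,
        (if s i = j then (∏ k ∈ Finset.univ.erase i, y k (s k)) else (0:ℝ))
          = ∏ k, G k (s k) := by
      intro s
      rw [← Finset.mul_prod_erase Finset.univ (fun k => G k (s k)) (Finset.mem_univ i)]
      have h2 : (∏ k ∈ Finset.univ.erase i, G k (s k))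
          = ∏ k ∈ Finset.univ.erase i, y k (s k) :=
        Finset.prod_congr rfl fun k hk => by simp [hG, (Finset.mem_erase.1 hk).1]
      rw [h2]
      simp only [hG, if_pos rfl]
      split <;> simp
    rw [Finset.sum_congr rfl fun s _ => h1 s, sum_prod_eq_prod_sum,
      ← Finset.mul_prod_erase Finset.univ _ (Finset.mem_univ i)]
    have h3 : (∑ l, G i l) = 1 := by simp [hG]
    have h4 : (∏ k ∈ Finset.univ.erase i, ∑ l, G k l) = 1 :=
      Finset.prod_eq_one fun k hk => by simp [hG, (Finset.mem_erase.1 hk).1, hy1 k]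
    rw [h3, h4, mul_one]
  unfold piSS Afun
  calc (∑ s : Fin d → Fin n, if s i = j then
          (∏ k ∈ Finset.univ.erase i, y k (s k)) * (shareSS d n score u s i - c i j) else 0)
      = (∑ s : Fin d → Fin n, if s i = j then
          (∏ k ∈ Finset.univ.erase i, y k (s k)) * shareSS d n score u s i else 0)
        - c i j * ∑ s : Fin d → Fin n,
            if s i = j then (∏ k ∈ Finset.univ.erase i, y k (s k)) else 0 := by
        rw [Finset.mul_sum, ← Finset.sum_sub_distrib]
        refine Finset.sum_congr rfl fun s _ => ?_
        split <;> ring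
    _ = _ := by rw [hB, mul_one]

private lemma Afun_update (d n : ℕ) (score : Fin n → ℝ) (u : Fin d → ℝ)
    (i : Fin d) (j : Fin n) (m : Fin d) (hm : m ≠ i)
    (y : Fin d → Fin n → ℝ) (q : Fin n → ℝ) :
    Afun d n score u i j (Function.update y m q)
      = ∑ l, q l * Cfun d n score u i j m y l := by
  classical
  have hmi : m ∈ Finset.univ.erase i := Finset.mem_erase.2 ⟨hm, Finset.mem_univ m⟩
  unfold Afun Cfun
  have key : ∀ s : Fin d → Fin n,
      (if s i = j then
        (∏ k ∈ Finset.univ.erase i, Function.update y m q k (s k)) * shareSS d n score u s i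
      else 0)
      = ∑ l, q l * (if s i = j ∧ s m = l then
          (∏ k ∈ (Finset.univ.erase i).erase m, y k (s k)) * shareSS d n score u s i else 0) := by
    intro s
    have hprod : (∏ k ∈ Finset.univ.erase i, Function.update y m q k (s k))
        = q (s m) * ∏ k ∈ (Finset.univ.erase i).erase m, y k (s k) := by
      rw [← Finset.mul_prod_erase (Finset.univ.erase i)
        (fun k => Function.update y m q k (s k)) hmi]
      congr 1
      · rw [Function.update_self]
      · exact Finset.prod_congr rfl fun k hk => by
          rw [Function.update_of_ne (Finset.mem_erase.1 hk).1]
    rcases eq_or_ne (s i) j with hsi | hsi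
    · rw [if_pos hsi, hprod]
      have hr : ∀ l, (q l * if s i = j ∧ s m = l then
            (∏ k ∈ (Finset.univ.erase i).erase m, y k (s k)) * shareSS d n score u s i else 0)
          = if s m = l then
              q l * ((∏ k ∈ (Finset.univ.erase i).erase m, y k (s k)) * shareSS d n score u s i)
            else 0 := by
        intro l
        rcases eq_or_ne (s m) l with hsm | hsm
        · rw [if_pos ⟨hsi, hsm⟩, if_pos hsm]
        · rw [if_neg (fun h => hsm h.2), if_neg hsm, mul_zero]
      rw [Finset.sum_congr rfl fun l _ => hr l, Finset.sum_ite_eq Finset.univ (s m)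
        (fun l => q l * ((∏ k ∈ (Finset.univ.erase i).erase m, y k (s k))
          * shareSS d n score u s i)), if_pos (Finset.mem_univ _)]
      ring
    · rw [if_neg hsi]
      symm
      apply Finset.sum_eq_zero
      intro l _
      rw [if_neg (fun h => hsi h.1), mul_zero]
  rw [Finset.sum_congr rfl fun s _ => key s, Finset.sum_comm]
  refine Finset.sum_congr rfl fun l _ => ?_
  rw [Finset.mul_sum]

private lemma Cfun_nonneg (d n : ℕ) (score : Fin n → ℝ) (u : Fin d → ℝ)
    (hu0 : ∀ l, 0 ≤ u l) (i : Fin d) (j : Fin n) (m : Fin d)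
    (y : Fin d → Fin n → ℝ) (hy0 : ∀ k l, 0 ≤ y k l) (l : Fin n) :
    0 ≤ Cfun d n score u i j m y l := by
  unfold Cfun
  apply Finset.sum_nonneg
  intro s _
  split
  · exact mul_nonneg (Finset.prod_nonneg fun k _ => hy0 k _)
      (shareSS_nonneg d n score u hu0 s i)
  · exact le_rfl

private lemma Cfun_le_one (d n : ℕ) (score : Fin n → ℝ) (u : Fin d → ℝ)
    (hu0 : ∀ l, 0 ≤ u l) (hu1 : ∀ l, u l ≤ 1) (i : Fin d) (j : Fin n) (m : Fin d) (hm : m ≠ i)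
    (y : Fin d → Fin n → ℝ) (hy0 : ∀ k l, 0 ≤ y k l) (hy1 : ∀ k, ∑ l, y k l = 1) (l : Fin n) :
    Cfun d n score u i j m y l ≤ 1 := by
  classical
  have hmi : m ∈ Finset.univ.erase i := Finset.mem_erase.2 ⟨hm, Finset.mem_univ m⟩
  set G : Fin d → Fin n → ℝ := fun k l' =>
    if k = i then (if l' = j then 1 else 0)
    else if k = m then (if l' = l then 1 else 0) else y k l' with hG
  have h1 : ∀ s : Fin d → Fin n,
      (if s i = j ∧ s m = l then (∏ k ∈ (Finset.univ.erase i).erase m, y k (s k)) else (0:ℝ))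
        = ∏ k, G k (s k) := by
    intro s
    rw [← Finset.mul_prod_erase Finset.univ (fun k => G k (s k)) (Finset.mem_univ i),
      ← Finset.mul_prod_erase (Finset.univ.erase i) (fun k => G k (s k)) hmi]
    have h2 : (∏ k ∈ (Finset.univ.erase i).erase m, G k (s k))
        = ∏ k ∈ (Finset.univ.erase i).erase m, y k (s k) :=
      Finset.prod_congr rfl fun k hk => by
        have h3 := Finset.mem_erase.1 hk
        have h4 := Finset.mem_erase.1 h3.2
        simp [hG, h3.1, h4.1]
    rw [h2]
    have hGi : G i (s i) = if s i = j then 1 else 0 := by simp [hG]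
    have hGm : G m (s m) = if s m = l then 1 else 0 := by simp [hG, hm]
    rw [hGi, hGm]
    by_cases hA : s i = j <;> by_cases hB : s m = l <;>
      simp [hA, hB]
  have hle : Cfun d n score u i j m y l ≤ ∑ s : Fin d → Fin n,
      if s i = j ∧ s m = l then (∏ k ∈ (Finset.univ.erase i).erase m, y k (s k)) else 0 := by
    unfold Cfun
    apply Finset.sum_le_sum
    intro s _
    split
    · exact mul_le_of_le_one_right (Finset.prod_nonneg fun k _ => hy0 k _)
        (shareSS_le_one d n score u hu1 s i)
    · exact le_rfl
  have heq1 : (∑ s : Fin d → Fin n,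
      if s i = j ∧ s m = l then (∏ k ∈ (Finset.univ.erase i).erase m, y k (s k)) else (0:ℝ)) = 1 := by
    rw [Finset.sum_congr rfl fun s _ => h1 s, sum_prod_eq_prod_sum,
      ← Finset.mul_prod_erase Finset.univ _ (Finset.mem_univ i),
      ← Finset.mul_prod_erase (Finset.univ.erase i) _ hmi]
    have h3 : (∑ l', G i l') = 1 := by simp [hG]
    have h4 : (∑ l', G m l') = 1 := by simp [hG, hm]
    have h5 : (∏ k ∈ (Finset.univ.erase i).erase m, ∑ l', G k l') = 1 :=
      Finset.prod_eq_one fun k hk => by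
        have h6 := Finset.mem_erase.1 hk
        have h7 := Finset.mem_erase.1 h6.2
        simp [hG, h6.1, h7.1, hy1 k]
    rw [h3, h4, h5]
    ring
  linarith

private lemma Cfun_congr (d n : ℕ) (score : Fin n → ℝ) (u : Fin d → ℝ)
    (i : Fin d) (j : Fin n) (m : Fin d) (hm : m ≠ i) (y : Fin d → Fin n → ℝ)
    (a b : Fin n)
    (hlt : score j < score a ↔ score j < score b)
    (heq : score a = score j ↔ score b = score j) :
    Cfun d n score u i j m y a = Cfun d n score u i j m y b := by
  classical
  unfold Cfun
  set F : Fin n → (Fin d → Fin n) → ℝ := fun v s =>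
    if s i = j ∧ s m = v then
      (∏ k ∈ (Finset.univ.erase i).erase m, y k (s k)) * shareSS d n score u s i
    else 0 with hF
  show ∑ s : Fin d → Fin n, F a s = ∑ s : Fin d → Fin n, F b s
  set e : (Fin d → Fin n) → (Fin d → Fin n) :=
    fun s => Function.update s m (Equiv.swap a b (s m)) with he
  have hinv : Function.Involutive e := by
    intro s
    simp only [he, Function.update_self, Function.update_idem, Equiv.swap_apply_self,
      Function.update_eq_self]
  have hkey : ∀ s, F b s = F a (e s) := by
    intro s
    have hei : e s i = s i := Function.update_of_ne (Ne.symm hm) _ _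
    have hem : e s m = Equiv.swap a b (s m) := Function.update_self _ _ _
    have hcond : (e s i = j ∧ e s m = a) ↔ (s i = j ∧ s m = b) := by
      rw [hei, hem]
      constructor
      · rintro ⟨h1, h2⟩
        refine ⟨h1, ?_⟩
        have := congrArg (Equiv.swap a b) h2
        rwa [Equiv.swap_apply_self, Equiv.swap_apply_left] at this
      · rintro ⟨h1, h2⟩
        refine ⟨h1, ?_⟩
        rw [h2, Equiv.swap_apply_right]
    rcases Classical.em (s i = j ∧ s m = b) with hs | hs
    · rw [hF]
      simp only []
      rw [if_pos hs, if_pos (hcond.2 hs)]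
      obtain ⟨hs1, hs2⟩ := hs
      have hes : e s = Function.update s m a := by
        rw [he]
        simp only [hs2, Equiv.swap_apply_right]
      rw [hes]
      have hp : (∏ k ∈ (Finset.univ.erase i).erase m, y k (Function.update s m a k))
          = ∏ k ∈ (Finset.univ.erase i).erase m, y k (s k) :=
        Finset.prod_congr rfl fun k hk => by
          rw [Function.update_of_ne (Finset.mem_erase.1 hk).1]
      rw [hp, shareSS_update d n score u s i m hm a ?_ ?_]
      · rw [hs1, hs2]; exact hlt
      · rw [hs1, hs2]; exact heq
    · rw [hF]
      simp only []
      rw [if_neg hs, if_neg (fun h => hs (hcond.1 h))]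
  calc ∑ s : Fin d → Fin n, F a s = ∑ s : Fin d → Fin n, F a (e s) :=
        (Fintype.sum_bijective e hinv.bijective _ _ (fun s => rfl)).symm
    _ = ∑ s : Fin d → Fin n, F b s := by
        exact Finset.sum_congr rfl fun s _ => (hkey s).symm

private lemma step_bound' (d n : ℕ) (score : Fin n → ℝ) (hscore : StrictMono score)
    (u : Fin d → ℝ) (hu0 : ∀ l, 0 ≤ u l) (hu1 : ∀ l, u l ≤ 1)
    (δ : ℝ) (hδ : 0 < δ) (i m : Fin d) (hm : m ≠ i) (j : Fin n)
    (xm xtm : Fin n → ℝ) (hxm1 : ∑ l, xm l = 1) (hxtm1 : ∑ l, xtm l = 1)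
    (hIic : ∀ jj : Fin n, |∑ l ∈ Finset.Iic jj, (xtm l - xm l)| < δ)
    (y : Fin d → Fin n → ℝ) (hy0 : ∀ k l, 0 ≤ y k l) (hy1 : ∀ k, ∑ l, y k l = 1) :
    |Afun d n score u i j (Function.update y m xtm) -
      Afun d n score u i j (Function.update y m xm)| < 3 * δ := by
  classical
  set Δ : Fin n → ℝ := fun l => xtm l - xm l with hΔ
  set C : Fin n → ℝ := Cfun d n score u i j m y with hCdef
  rw [Afun_update d n score u i j m hm y xtm, Afun_update d n score u i j m hm y xm]
  have hdiff : (∑ l, xtm l * C l) - (∑ l, xm l * C l) = ∑ l, Δ l * C l := by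
    rw [← Finset.sum_sub_distrib]
    exact Finset.sum_congr rfl fun l _ => by rw [hΔ]; ring
  rw [hdiff]
  have hC0 : ∀ l, 0 ≤ C l := Cfun_nonneg d n score u hu0 i j m y hy0
  have hC1 : ∀ l, C l ≤ 1 := Cfun_le_one d n score u hu0 hu1 i j m hm y hy0 hy1
  have hΔ0 : ∑ l, Δ l = 0 := by
    rw [hΔ, Finset.sum_sub_distrib, hxtm1, hxm1, sub_self]
  have hn : 0 < n := j.pos
  set l0 : Fin n := ⟨0, hn⟩ with hl0
  set lN : Fin n := ⟨n - 1, by omega⟩ with hlN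
  have hl0v : (l0 : ℕ) = 0 := rfl
  have hlNv : (lN : ℕ) = n - 1 := rfl
  have hCIio : ∀ l ∈ Finset.Iio j, C l = C l0 := by
    intro l hl
    have hlj : (l : ℕ) < (j : ℕ) := Fin.lt_def.1 (Finset.mem_Iio.1 hl)
    refine Cfun_congr d n score u i j m hm y l l0 ?_ ?_
    · rw [hscore.lt_iff_lt, hscore.lt_iff_lt]
      exact iff_of_false (by rw [Fin.lt_def]; omega) (by rw [Fin.lt_def, hl0v]; omega)
    · rw [hscore.injective.eq_iff, hscore.injective.eq_iff]
      refine iff_of_false (fun h => by rw [Fin.ext_iff] at h; omega)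
        (fun h => by rw [Fin.ext_iff, hl0v] at h; omega)
  have hCIoi : ∀ l ∈ Finset.Ioi j, C l = C lN := by
    intro l hl
    have hlj : (j : ℕ) < (l : ℕ) := Fin.lt_def.1 (Finset.mem_Ioi.1 hl)
    have hln : (l : ℕ) < n := l.isLt
    refine Cfun_congr d n score u i j m hm y l lN ?_ ?_
    · rw [hscore.lt_iff_lt, hscore.lt_iff_lt]
      exact iff_of_true (by rw [Fin.lt_def]; omega) (by rw [Fin.lt_def, hlNv]; omega)
    · rw [hscore.injective.eq_iff, hscore.injective.eq_iff]
      refine iff_of_false (fun h => by rw [Fin.ext_iff] at h; omega)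
        (fun h => by rw [Fin.ext_iff, hlNv] at h; omega)
  have hpart : ∀ f : Fin n → ℝ,
      ∑ l, f l = (∑ l ∈ Finset.Iio j, f l) + f j + ∑ l ∈ Finset.Ioi j, f l := by
    intro f
    have huniv : (Finset.Iic j) ∪ (Finset.Ioi j) = Finset.univ := by
      ext l
      simp [le_or_gt]
    have hdisj : Disjoint (Finset.Iic j) (Finset.Ioi j) := by
      rw [Finset.disjoint_left]
      intro a' ha hb
      simp only [Finset.mem_Iic] at ha
      simp only [Finset.mem_Ioi] at hb
      exact absurd hb (not_lt.2 ha)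
    have hins : (Finset.Iic j) = insert j (Finset.Iio j) := (Finset.Iio_insert j).symm
    rw [← huniv, Finset.sum_union hdisj, hins, Finset.sum_insert (by simp)]
    ring
  set a := ∑ l ∈ Finset.Iio j, Δ l with ha_def
  set b := Δ j with hb_def
  set g := ∑ l ∈ Finset.Ioi j, Δ l with hg_def
  have habg : a + b + g = 0 := by
    have := hpart Δ
    rw [hΔ0] at this
    linarith [this]
  have hsum : ∑ l, Δ l * C l = a * C l0 + b * C j + g * C lN := by
    rw [hpart (fun l => Δ l * C l)]
    congr 1
    · congr 1
      rw [Finset.sum_congr rfl (fun l hl => by rw [hCIio l hl]), ← Finset.sum_mul]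
    · rw [Finset.sum_congr rfl (fun l hl => by rw [hCIoi l hl]), ← Finset.sum_mul]
  have haI : |a| < δ := by
    by_cases hj0 : (j : ℕ) = 0
    · have hIempty : Finset.Iio j = ∅ := by
        ext l
        simp only [Finset.mem_Iio, Finset.notMem_empty, iff_false, Fin.lt_def]
        omega
      rw [ha_def, hIempty]
      simpa using hδ
    · have hIeq : Finset.Iio j = Finset.Iic (⟨(j : ℕ) - 1, by omega⟩ : Fin n) := by
        ext l
        simp only [Finset.mem_Iio, Finset.mem_Iic, Fin.lt_def, Fin.le_def]
        omega
      rw [ha_def, hIeq]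
      exact hIic _
  have hbI : |b| < 2 * δ := by
    have hIic_j : ∑ l ∈ Finset.Iic j, Δ l = b + a := by
      have hins : (Finset.Iic j) = insert j (Finset.Iio j) := (Finset.Iio_insert j).symm
      rw [hins, Finset.sum_insert (by simp)]
    have h1 := hIic j
    have h2 : b = (∑ l ∈ Finset.Iic j, Δ l) - a := by rw [hIic_j]; ring
    rw [h2]
    calc |(∑ l ∈ Finset.Iic j, Δ l) - a| ≤ |∑ l ∈ Finset.Iic j, Δ l| + |a| := abs_sub _ _
      _ < δ + δ := by exact add_lt_add h1 haI
      _ = 2 * δ := by ring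
  have hg_eq : g = -a - b := by linarith
  have hfin : a * C l0 + b * C j + g * C lN = a * (C l0 - C lN) + b * (C j - C lN) := by
    rw [hg_eq]
    ring
  have habs1 : |C l0 - C lN| ≤ 1 :=
    abs_le.2 ⟨by linarith [hC0 l0, hC1 lN], by linarith [hC1 l0, hC0 lN]⟩
  have habs2 : |C j - C lN| ≤ 1 :=
    abs_le.2 ⟨by linarith [hC0 j, hC1 lN], by linarith [hC1 j, hC0 lN]⟩
  calc |∑ l, Δ l * C l| = |a * (C l0 - C lN) + b * (C j - C lN)| := by rw [hsum, hfin]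
    _ ≤ |a * (C l0 - C lN)| + |b * (C j - C lN)| := abs_add_le _ _
    _ = |a| * |C l0 - C lN| + |b| * |C j - C lN| := by rw [abs_mul, abs_mul]
    _ ≤ |a| * 1 + |b| * 1 := by
        gcongr
    _ < δ * 1 + (2 * δ) * 1 := by
        apply add_lt_add
        · simpa using haI
        · simpa using hbI
    _ = 3 * δ := by ring

private lemma Afun_diff_bound (d n : ℕ) (hd : 2 ≤ d) (score : Fin n → ℝ)
    (hscore : StrictMono score)
    (u : Fin d → ℝ) (hu0 : ∀ l, 0 ≤ u l) (hu1 : ∀ l, u l ≤ 1)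
    (δ : ℝ) (hδ : 0 < δ) (x xt : Fin d → Fin n → ℝ)
    (hx0 : ∀ k l, 0 ≤ x k l) (hx1 : ∀ k, ∑ l, x k l = 1)
    (hxt0 : ∀ k l, 0 ≤ xt k l) (hxt1 : ∀ k, ∑ l, xt k l = 1)
    (hclose : ∀ (k : Fin d) (jj : Fin n), |∑ l ∈ Finset.Iic jj, (xt k l - x k l)| < δ)
    (i : Fin d) (j : Fin n) :
    |Afun d n score u i j xt - Afun d n score u i j x| < 3 * ((d - 1 : ℕ) : ℝ) * δ := by
  classical
  set z : ℕ → Fin d → Fin n → ℝ := fun r k => if (k : ℕ) < r then xt k else x k with hz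
  have hz0 : z 0 = x := by
    funext k
    simp [hz]
  have hzd : z d = xt := by
    funext k
    simp [hz, k.isLt]
  have hzprob0 : ∀ r k l, 0 ≤ z r k l := by
    intro r k l
    by_cases h : (k : ℕ) < r
    · simp only [hz, if_pos h]; exact hxt0 k l
    · simp only [hz, if_neg h]; exact hx0 k l
  have hzprob1 : ∀ r k, ∑ l, z r k l = 1 := by
    intro r k
    by_cases h : (k : ℕ) < r
    · simp only [hz, if_pos h]; exact hxt1 k
    · simp only [hz, if_neg h]; exact hx1 k
  have htel := Finset.sum_range_sub (fun r => Afun d n score u i j (z r)) d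
  rw [hz0, hzd] at htel
  have hterm : ∀ r : ℕ, r < d → r ≠ (i : ℕ) →
      |Afun d n score u i j (z (r + 1)) - Afun d n score u i j (z r)| < 3 * δ := by
    intro r hr hri
    set m : Fin d := ⟨r, hr⟩ with hmdef
    have hm : m ≠ i := fun h => hri (by rw [← h])
    have h1 : z (r + 1) = Function.update (z r) m (xt m) := by
      funext k
      by_cases hk : k = m
      · subst hk
        rw [Function.update_self]
        simp only [hz]
        rw [if_pos (by show r < r + 1; omega)]
      · rw [Function.update_of_ne hk]
        have hkr : (k : ℕ) ≠ r := fun h => hk (Fin.ext h)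
        simp only [hz]
        by_cases h2 : (k : ℕ) < r
        · rw [if_pos h2, if_pos (by omega)]
        · rw [if_neg h2, if_neg (by omega)]
    have h2 : z r = Function.update (z r) m (x m) := by
      funext k
      by_cases hk : k = m
      · subst hk
        rw [Function.update_self]
        simp only [hz]
        rw [if_neg (by show ¬ r < r; omega)]
      · rw [Function.update_of_ne hk]
    calc |Afun d n score u i j (z (r + 1)) - Afun d n score u i j (z r)|
        = |Afun d n score u i j (Function.update (z r) m (xt m))
            - Afun d n score u i j (Function.update (z r) m (x m))| := by rw [← h1, ← h2]
      _ < 3 * δ := step_bound' d n score hscore u hu0 hu1 δ hδ i m hm j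
          (x m) (xt m) (hx1 m) (hxt1 m) (fun jj => hclose m jj)
          (z r) (hzprob0 r) (hzprob1 r)
  have hieq : Afun d n score u i j (z ((i : ℕ) + 1)) = Afun d n score u i j (z (i : ℕ)) := by
    apply Afun_congr
    intro k hk
    have hki : (k : ℕ) ≠ (i : ℕ) := fun h => hk (Fin.ext h)
    simp only [hz]
    by_cases h2 : (k : ℕ) < (i : ℕ)
    · rw [if_pos h2, if_pos (by omega)]
    · rw [if_neg h2, if_neg (by omega)]
  have himem : (i : ℕ) ∈ Finset.range d := Finset.mem_range.2 i.isLt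
  have hne : ((Finset.range d).erase (i : ℕ)).Nonempty := by
    rw [← Finset.card_pos, Finset.card_erase_of_mem himem, Finset.card_range]
    omega
  calc |Afun d n score u i j xt - Afun d n score u i j x|
      = |∑ r ∈ Finset.range d,
          (Afun d n score u i j (z (r + 1)) - Afun d n score u i j (z r))| := by rw [htel]
    _ ≤ ∑ r ∈ Finset.range d,
          |Afun d n score u i j (z (r + 1)) - Afun d n score u i j (z r)| :=
        Finset.abs_sum_le_sum_abs _ _
    _ = |Afun d n score u i j (z ((i : ℕ) + 1)) - Afun d n score u i j (z (i : ℕ))|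
        + ∑ r ∈ (Finset.range d).erase (i : ℕ),
            |Afun d n score u i j (z (r + 1)) - Afun d n score u i j (z r)| :=
        (Finset.add_sum_erase _ _ himem).symm
    _ = ∑ r ∈ (Finset.range d).erase (i : ℕ),
            |Afun d n score u i j (z (r + 1)) - Afun d n score u i j (z r)| := by
        rw [hieq, sub_self, abs_zero, zero_add]
    _ < ∑ _r ∈ (Finset.range d).erase (i : ℕ), 3 * δ := by
        apply Finset.sum_lt_sum_of_nonempty hne
        intro r hr
        have hr1 := Finset.mem_erase.1 hr
        exact hterm r (Finset.mem_range.1 hr1.2) hr1.1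
    _ = 3 * ((d - 1 : ℕ) : ℝ) * δ := by
        rw [Finset.sum_const, Finset.card_erase_of_mem himem, Finset.card_range,
          nsmul_eq_mul]
        ring

/-- if two mixed profiles of a score-symmetric
competitiveness-based ranking game (prizes in [0,1]) have all prefix sums
within `δ` of each other, then all expected payoffs `π_j^i` differ by less than
`3^(d-1)·((1+δ)^(d-1) - 1)`; in particular with `δ = ε/(4d²·3^d)`,
`0 < ε ≤ 1`, they differ by less than `ε/4`. -/
theorem payoff_perturbation_bound (d n : ℕ) (hd : 2 ≤ d)
    (score : Fin n → ℝ) (hscore : StrictMono score)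
    (u : Fin d → ℝ) (huI : ∀ l, u l ∈ Set.Icc (0 : ℝ) 1)
    (hu : Antitone u) (hud : u ⟨d - 1, by omega⟩ < u ⟨0, by omega⟩)
    (c : Fin d → Fin n → ℝ) (hc : ∀ i, StrictMono (c i))
    (δ : ℝ) (hδ : 0 < δ)
    (x xt : Fin d → Fin n → ℝ)
    (hx0 : ∀ i j, 0 ≤ x i j) (hx1 : ∀ i, ∑ j, x i j = 1)
    (hxt0 : ∀ i j, 0 ≤ xt i j) (hxt1 : ∀ i, ∑ j, xt i j = 1)
    (hclose : ∀ (k : Fin d) (j : Fin n), |∑ l ∈ Finset.Iic j, (xt k l - x k l)| < δ) :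
    (∀ (i : Fin d) (j : Fin n),
        |piSS d n score u c xt i j - piSS d n score u c x i j| <
          3 ^ (d - 1) * ((1 + δ) ^ (d - 1) - 1)) ∧
    (∀ ε : ℝ, 0 < ε → ε ≤ 1 → δ = ε / (4 * (d : ℝ) ^ 2 * 3 ^ d) →
      ∀ (i : Fin d) (j : Fin n),
        |piSS d n score u c xt i j - piSS d n score u c x i j| < ε / 4) := by
  have hu0 : ∀ l, 0 ≤ u l := fun l => (huI l).1
  have hu1 : ∀ l, u l ≤ 1 := fun l => (huI l).2
  have key : ∀ (i : Fin d) (j : Fin n),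
      |piSS d n score u c xt i j - piSS d n score u c x i j|
        < 3 * ((d - 1 : ℕ) : ℝ) * δ := by
    intro i j
    rw [piSS_eq_Afun d n score u c xt hxt1 i j, piSS_eq_Afun d n score u c x hx1 i j]
    have h := Afun_diff_bound d n hd score hscore u hu0 hu1 δ hδ x xt hx0 hx1 hxt0 hxt1
      hclose i j
    have heq : (Afun d n score u i j xt - c i j) - (Afun d n score u i j x - c i j)
        = Afun d n score u i j xt - Afun d n score u i j x := by ring
    rw [heq]
    exact h
  have hm1 : 1 ≤ d - 1 := by omega
  have hcast : (1 : ℝ) ≤ ((d - 1 : ℕ) : ℝ) := by exact_mod_cast hm1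
  constructor
  · intro i j
    refine lt_of_lt_of_le (key i j) ?_
    have hbern : 1 + ((d - 1 : ℕ) : ℝ) * δ ≤ (1 + δ) ^ (d - 1) :=
      one_add_mul_le_pow (by linarith) (d - 1)
    have h3 : (3 : ℝ) ≤ 3 ^ (d - 1) := by
      calc (3 : ℝ) = 3 ^ 1 := (pow_one 3).symm
        _ ≤ 3 ^ (d - 1) := pow_le_pow_right₀ (by norm_num) hm1
    have hnn : 0 ≤ ((d - 1 : ℕ) : ℝ) * δ := by positivity
    calc 3 * ((d - 1 : ℕ) : ℝ) * δ = 3 * (((d - 1 : ℕ) : ℝ) * δ) := by ring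
      _ ≤ 3 * ((1 + δ) ^ (d - 1) - 1) := by nlinarith [hbern]
      _ ≤ 3 ^ (d - 1) * ((1 + δ) ^ (d - 1) - 1) := by nlinarith [h3, hbern, hnn]
  · intro ε hε hε1 hδeq i j
    refine lt_of_lt_of_le (key i j) ?_
    have hP : (0 : ℝ) < 4 * (d : ℝ) ^ 2 * 3 ^ d := by
      have : (0 : ℝ) < (d : ℝ) := by exact_mod_cast (by omega : 0 < d)
      positivity
    have hnum : (3 : ℝ) * ((d - 1 : ℕ) : ℝ) ≤ (d : ℝ) ^ 2 * 3 ^ d := by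
      have hnat : 3 * (d - 1) ≤ d ^ 2 * 3 ^ d := by
        have h2 : 3 ≤ 3 ^ d := by
          calc 3 = 3 ^ 1 := rfl
            _ ≤ 3 ^ d := Nat.pow_le_pow_right (by norm_num) (by omega)
        have h3 : d - 1 ≤ d ^ 2 := by nlinarith [Nat.sub_le d 1]
        calc 3 * (d - 1) ≤ 3 ^ d * (d ^ 2) := Nat.mul_le_mul h2 h3
          _ = d ^ 2 * 3 ^ d := by ring
      exact_mod_cast hnat
    rw [hδeq, show 3 * ((d - 1 : ℕ) : ℝ) * (ε / (4 * (d : ℝ) ^ 2 * 3 ^ d))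
        = (3 * ((d - 1 : ℕ) : ℝ) * ε) / (4 * (d : ℝ) ^ 2 * 3 ^ d) from by ring,
      div_le_div_iff₀ hP (by norm_num : (0 : ℝ) < 4)]
    nlinarith [mul_le_mul_of_nonneg_right hnum (le_of_lt hε)]
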